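/- For the modulo-additive binary channel Y = X ⊕ S ⊕ N, Z = X ⊕ S ⊕ N_z with S ~ Bern(p_s), N ~ Bern(p_n), N_z ~ Bern(p_{n_z}), all independent, if p_n ≤ p_{n_z} then for every conditional distribution p(x|s): I(S; Y) - I(S; Z) ≤ H(p_{n_z}) - H(p_n), where H is the binary entropy function. -/

import Mathlib

open scoped BigOperators

/-- The distribution (pmf) of a random variable `X : Ω → α` under the pmf `μ` on
a finite sample space `Ω`. -/
noncomputable def distOf {Ω α : Type*} [Fintype Ω] [DecidableEq α]
    (μ : Ω → ℝ) (X : Ω → α) (a : α) : ℝ :=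
  ∑ ω : Ω, if X ω = a then μ ω else 0

/-- `μ` is a probability mass function on the finite space `Ω`. -/
def IsPMF {Ω : Type*} [Fintype Ω] (μ : Ω → ℝ) : Prop :=
  (∀ ω, 0 ≤ μ ω) ∧ ∑ ω : Ω, μ ω = 1

/-- Shannon entropy (in nats) of the random variable `X` under the pmf `μ`
(with the convention `0 log 0 = 0`, which holds for `Real.log`). -/
noncomputable def entropy {Ω α : Type*} [Fintype Ω] [Fintype α] [DecidableEq α]
    (μ : Ω → ℝ) (X : Ω → α) : ℝ :=
  -∑ a : α, distOf μ X a * Real.log (distOf μ X a)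

/-- Mutual information `I(X;Y) = H(X) + H(Y) - H(X,Y)`. -/
noncomputable def mutInfo {Ω α β : Type*} [Fintype Ω] [Fintype α] [DecidableEq α]
    [Fintype β] [DecidableEq β] (μ : Ω → ℝ) (X : Ω → α) (Y : Ω → β) : ℝ :=
  entropy μ X + entropy μ Y - entropy μ (fun ω => (X ω, Y ω))

/-- Conditional mutual information
`I(X;Y|Z) = H(X,Z) + H(Y,Z) - H(X,Y,Z) - H(Z)`. -/
noncomputable def condMutInfo {Ω α β γ : Type*} [Fintype Ω]
    [Fintype α] [DecidableEq α] [Fintype β] [DecidableEq β]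
    [Fintype γ] [DecidableEq γ]
    (μ : Ω → ℝ) (X : Ω → α) (Y : Ω → β) (Z : Ω → γ) : ℝ :=
  entropy μ (fun ω => (X ω, Z ω)) + entropy μ (fun ω => (Y ω, Z ω)) -
    entropy μ (fun ω => (X ω, Y ω, Z ω)) - entropy μ Z

/-- Two random variables are independent under the pmf `μ`. -/
def IndepRV {Ω α β : Type*} [Fintype Ω] [DecidableEq α] [DecidableEq β]
    (μ : Ω → ℝ) (X : Ω → α) (Y : Ω → β) : Prop :=
  ∀ a b, distOf μ (fun ω => (X ω, Y ω)) (a, b) = distOf μ X a * distOf μ Y b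

/-- Binary entropy function. -/
noncomputable def binEnt (x : ℝ) : ℝ := -x * Real.log x - (1 - x) * Real.log (1 - x)

/-! ### Auxiliary analytic lemmas -/

/-- BSC convolution of probabilities. -/
noncomputable def bstar (q p : ℝ) : ℝ := q * (1 - p) + (1 - q) * p

lemma binEnt_eq (x : ℝ) : binEnt x = Real.negMulLog x + Real.negMulLog (1 - x) := by
  simp [binEnt, Real.negMulLog]; ring

lemma continuous_binEnt : Continuous binEnt := by
  have h : binEnt = fun x => Real.negMulLog x + Real.negMulLog (1 - x) := funext binEnt_eq
  rw [h]
  exact Real.continuous_negMulLog.add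
    (Real.continuous_negMulLog.comp (continuous_const.sub continuous_id))

lemma binEnt_symm (x : ℝ) : binEnt (1 - x) = binEnt x := by
  simp [binEnt]; ring

lemma hasDerivAt_binEnt {x : ℝ} (h0 : x ≠ 0) (h1 : x ≠ 1) :
    HasDerivAt binEnt (Real.log (1 - x) - Real.log x) x := by
  have h1' : (1 : ℝ) - x ≠ 0 := sub_ne_zero.mpr (Ne.symm h1)
  have d1 := Real.hasDerivAt_negMulLog h0
  have dsub : HasDerivAt (fun y : ℝ => 1 - y) (-1) x := (hasDerivAt_id x).const_sub 1
  have d2 : HasDerivAt (fun y : ℝ => Real.negMulLog (1 - y))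
      ((-Real.log (1 - x) - 1) * (-1)) x :=
    (Real.hasDerivAt_negMulLog h1').comp x dsub
  have := d1.add d2
  have heq : binEnt = fun y => Real.negMulLog y + Real.negMulLog (1 - y) := funext binEnt_eq
  rw [heq]
  refine this.congr_deriv ?_
  ring

lemma binEnt_mono : MonotoneOn binEnt (Set.Icc (0:ℝ) (1/2)) := by
  apply monotoneOn_of_deriv_nonneg (convex_Icc _ _) continuous_binEnt.continuousOn
  · intro x hx
    rw [interior_Icc] at hx
    exact (hasDerivAt_binEnt (ne_of_gt hx.1) (by linarith [hx.2])).differentiableAt.differentiableWithinAt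
  · intro x hx
    rw [interior_Icc] at hx
    rw [(hasDerivAt_binEnt (ne_of_gt hx.1) (by linarith [hx.2])).deriv]
    have hlog : Real.log x ≤ Real.log (1 - x) :=
      Real.log_le_log hx.1 (by linarith [hx.2])
    linarith

lemma bstar_mem {q p : ℝ} (hq0 : 0 ≤ q) (hq : q ≤ 1/2) (hp0 : 0 ≤ p) (hp : p ≤ 1/2) :
    0 ≤ bstar q p ∧ bstar q p ≤ 1/2 := by
  unfold bstar; constructor <;> nlinarith

lemma core_half {q pn pnz : ℝ} (hq0 : 0 ≤ q) (hq : q ≤ 1/2) (hpn0 : 0 ≤ pn)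
    (hle : pn ≤ pnz) (hpnz : pnz ≤ 1/2) :
    binEnt (bstar q pnz) - binEnt (bstar q pn) ≤ binEnt pnz - binEnt pn := by
  have hanti : AntitoneOn (fun p => binEnt (bstar q p) - binEnt p) (Set.Icc (0:ℝ) (1/2)) := by
    apply antitoneOn_of_deriv_nonpos (convex_Icc _ _)
    · exact ((continuous_binEnt.comp (by unfold bstar; continuity)).sub
        continuous_binEnt).continuousOn
    · intro p hp
      rw [interior_Icc] at hp
      obtain ⟨hp0, hp2⟩ := hp
      have hu0 : 0 < bstar q p := by unfold bstar; nlinarith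
      have hu2 : bstar q p ≤ 1/2 := (bstar_mem hq0 hq hp0.le hp2.le).2
      have dstar : HasDerivAt (fun p => bstar q p) (1 - 2*q) p := by
        have : HasDerivAt (fun p : ℝ => q + (1 - 2*q) * p) (1 - 2*q) p := by
          simpa using ((hasDerivAt_id p).const_mul (1 - 2*q)).const_add q
        convert this using 1
        funext y; unfold bstar; ring
      have dcomp : HasDerivAt (fun p => binEnt (bstar q p))
          ((Real.log (1 - bstar q p) - Real.log (bstar q p)) * (1 - 2*q)) p :=
        (hasDerivAt_binEnt (ne_of_gt hu0) (by linarith)).comp p dstar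
      have dg : HasDerivAt (fun p => binEnt (bstar q p) - binEnt p)
          ((Real.log (1 - bstar q p) - Real.log (bstar q p)) * (1 - 2*q)
            - (Real.log (1 - p) - Real.log p)) p :=
        dcomp.sub (hasDerivAt_binEnt (ne_of_gt hp0) (by linarith))
      exact (dg.differentiableAt).differentiableWithinAt
    · intro p hp
      rw [interior_Icc] at hp
      obtain ⟨hp0, hp2⟩ := hp
      have hu0 : 0 < bstar q p := by unfold bstar; nlinarith
      have hu2 : bstar q p ≤ 1/2 := (bstar_mem hq0 hq hp0.le hp2.le).2
      have hup : p ≤ bstar q p := by unfold bstar; nlinarith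
      have dstar : HasDerivAt (fun p => bstar q p) (1 - 2*q) p := by
        have : HasDerivAt (fun p : ℝ => q + (1 - 2*q) * p) (1 - 2*q) p := by
          simpa using ((hasDerivAt_id p).const_mul (1 - 2*q)).const_add q
        convert this using 1
        funext y; unfold bstar; ring
      have dcomp : HasDerivAt (fun p => binEnt (bstar q p))
          ((Real.log (1 - bstar q p) - Real.log (bstar q p)) * (1 - 2*q)) p :=
        (hasDerivAt_binEnt (ne_of_gt hu0) (by linarith)).comp p dstar
      have dg : HasDerivAt (fun p => binEnt (bstar q p) - binEnt p)
          ((Real.log (1 - bstar q p) - Real.log (bstar q p)) * (1 - 2*q)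
            - (Real.log (1 - p) - Real.log p)) p :=
        dcomp.sub (hasDerivAt_binEnt (ne_of_gt hp0) (by linarith))
      rw [dg.deriv]
      have hA : 0 ≤ Real.log (1 - bstar q p) - Real.log (bstar q p) := by
        have := Real.log_le_log hu0 (by linarith : bstar q p ≤ 1 - bstar q p)
        linarith
      have h1 : Real.log p ≤ Real.log (bstar q p) := Real.log_le_log hp0 hup
      have h2 : Real.log (1 - bstar q p) ≤ Real.log (1 - p) :=
        Real.log_le_log (by linarith) (by linarith)
      nlinarith [mul_le_of_le_one_right hA (by linarith : 1 - 2*q ≤ 1)]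
  have h1 : pn ∈ Set.Icc (0:ℝ) (1/2) := ⟨hpn0, by linarith⟩
  have h2 : pnz ∈ Set.Icc (0:ℝ) (1/2) := ⟨by linarith, hpnz⟩
  have := hanti h1 h2 hle
  simp only at this
  linarith

lemma bstar_compl (q p : ℝ) : bstar q p = 1 - bstar (1 - q) p := by
  unfold bstar; ring

lemma core {q pn pnz : ℝ} (hq0 : 0 ≤ q) (hq1 : q ≤ 1) (hpn0 : 0 ≤ pn)
    (hle : pn ≤ pnz) (hpnz : pnz ≤ 1/2) :
    binEnt (bstar q pnz) - binEnt (bstar q pn) ≤ binEnt pnz - binEnt pn := by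
  rcases le_or_gt q (1/2) with h | h
  · exact core_half hq0 h hpn0 hle hpnz
  · rw [bstar_compl q pnz, bstar_compl q pn, binEnt_symm, binEnt_symm]
    exact core_half (by linarith) (by linarith) hpn0 hle hpnz

lemma mono2 {q pn pnz : ℝ} (hq0 : 0 ≤ q) (hq1 : q ≤ 1) (hpn0 : 0 ≤ pn)
    (hle : pn ≤ pnz) (hpnz : pnz ≤ 1/2) :
    binEnt (bstar q pn) ≤ binEnt (bstar q pnz) := by
  rcases le_or_gt q (1/2) with h | h
  · have m1 := bstar_mem hq0 h hpn0 (by linarith : pn ≤ 1/2)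
    have m2 := bstar_mem hq0 h (by linarith : (0:ℝ) ≤ pnz) hpnz
    apply binEnt_mono (Set.mem_Icc.mpr m1) (Set.mem_Icc.mpr m2)
    unfold bstar; nlinarith
  · rw [bstar_compl q pn, bstar_compl q pnz, binEnt_symm, binEnt_symm]
    have m1 := bstar_mem (by linarith : (0:ℝ) ≤ 1-q) (by linarith) hpn0 (by linarith : pn ≤ 1/2)
    have m2 := bstar_mem (by linarith : (0:ℝ) ≤ 1-q) (by linarith)
      (by linarith : (0:ℝ) ≤ pnz) hpnz
    apply binEnt_mono (Set.mem_Icc.mpr m1) (Set.mem_Icc.mpr m2)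
    unfold bstar; nlinarith

lemma nml_split {m x : ℝ} :
    Real.negMulLog (m * x) = x * Real.negMulLog m + m * Real.negMulLog x :=
  Real.negMulLog_mul m x

lemma star2 {a0 a1 pn pnz : ℝ} (ha0 : 0 ≤ a0) (ha1 : 0 ≤ a1) (hpn0 : 0 ≤ pn)
    (hle : pn ≤ pnz) (hpnz : pnz ≤ 1/2) :
    Real.negMulLog (a0 * pnz + a1 * (1 - pnz)) + Real.negMulLog (a0 * (1 - pnz) + a1 * pnz)
      - Real.negMulLog (a0 * pn + a1 * (1 - pn)) - Real.negMulLog (a0 * (1 - pn) + a1 * pn)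
      ≤ (a0 + a1) * (binEnt pnz - binEnt pn) := by
  rcases eq_or_lt_of_le (by linarith : (0:ℝ) ≤ a0 + a1) with hm | hm
  · have h0 : a0 = 0 := by linarith
    have h1 : a1 = 0 := by linarith
    simp [h0, h1, Real.negMulLog_zero]
  · set m := a0 + a1 with hmdef
    set q := a1 / m with hqdef
    have hq0 : 0 ≤ q := div_nonneg ha1 hm.le
    have hq1 : q ≤ 1 := by rw [hqdef]; rw [div_le_one hm]; linarith
    have key : ∀ p : ℝ, a0 * p + a1 * (1 - p) = m * bstar q p ∧
        a0 * (1 - p) + a1 * p = m * (1 - bstar q p) := by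
      intro p
      have ha1m : a1 = m * q := by rw [hqdef]; field_simp [hm.ne']
      have ha0m : a0 = m * (1 - q) := by rw [hmdef] at *; nlinarith
      constructor <;> · rw [ha1m, ha0m]; unfold bstar; ring
    have ent : ∀ p : ℝ, Real.negMulLog (a0 * p + a1 * (1 - p))
        + Real.negMulLog (a0 * (1 - p) + a1 * p)
        = m * binEnt (bstar q p) + Real.negMulLog m := by
      intro p
      rw [(key p).1, (key p).2, nml_split, nml_split, binEnt_eq]
      ring
    rw [show Real.negMulLog (a0 * pnz + a1 * (1 - pnz)) + Real.negMulLog (a0 * (1 - pnz) + a1 * pnz)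
      - Real.negMulLog (a0 * pn + a1 * (1 - pn)) - Real.negMulLog (a0 * (1 - pn) + a1 * pn)
      = (Real.negMulLog (a0 * pnz + a1 * (1 - pnz)) + Real.negMulLog (a0 * (1 - pnz) + a1 * pnz))
      - (Real.negMulLog (a0 * pn + a1 * (1 - pn)) + Real.negMulLog (a0 * (1 - pn) + a1 * pn)) by ring,
      ent pnz, ent pn]
    have := core hq0 hq1 hpn0 hle hpnz
    nlinarith

/-! ### Auxiliary probabilistic lemmas -/

section problemmas
variable {Ω α β : Type*} [Fintype Ω] [DecidableEq α] [DecidableEq β]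

lemma distOf_nonneg {μ : Ω → ℝ} (h : ∀ ω, 0 ≤ μ ω) (X : Ω → α) (a : α) :
    0 ≤ distOf μ X a :=
  Finset.sum_nonneg fun ω _ => by split <;> [exact h ω; exact le_rfl]

lemma sum_distOf [Fintype α] {μ : Ω → ℝ} (X : Ω → α) :
    ∑ a : α, distOf μ X a = ∑ ω : Ω, μ ω := by
  unfold distOf
  rw [Finset.sum_comm]
  exact Finset.sum_congr rfl fun ω _ => by simp [Finset.sum_ite_eq]

lemma distOf_fst_marg [Fintype β] {μ : Ω → ℝ} (W : Ω → α) (V : Ω → β) (a : α) :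
    ∑ b : β, distOf μ (fun ω => (W ω, V ω)) (a, b) = distOf μ W a := by
  unfold distOf
  rw [Finset.sum_comm]
  refine Finset.sum_congr rfl fun ω _ => ?_
  by_cases h : W ω = a
  · simp [Prod.ext_iff, h, ite_and, Finset.sum_ite_eq]
  · simp [Prod.ext_iff, h]

lemma distOf_snd_marg [Fintype α] {μ : Ω → ℝ} (W : Ω → α) (V : Ω → β) (b : β) :
    ∑ a : α, distOf μ (fun ω => (W ω, V ω)) (a, b) = distOf μ V b := by
  unfold distOf
  rw [Finset.sum_comm]
  refine Finset.sum_congr rfl fun ω _ => ?_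
  by_cases h : V ω = b
  · simp [Prod.ext_iff, h, ite_and, Finset.sum_ite_eq]
  · simp [Prod.ext_iff, h, ite_and]

lemma indep_fst {γ : Type*} [DecidableEq γ] [Fintype β] {μ : Ω → ℝ}
    {U : Ω → α} {V : Ω → β} {W : Ω → γ}
    (h : IndepRV μ (fun ω => (U ω, V ω)) W) : IndepRV μ U W := by
  intro a c
  have h1 : distOf μ (fun ω => (U ω, W ω)) (a, c)
      = ∑ b : β, distOf μ (fun ω => ((U ω, V ω), W ω)) ((a, b), c) := by
    unfold distOf
    rw [Finset.sum_comm]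
    refine Finset.sum_congr rfl fun ω _ => ?_
    by_cases hu : U ω = a <;> by_cases hw : W ω = c <;>
      simp [Prod.ext_iff, hu, hw, ite_and, Finset.sum_ite_eq]
  rw [h1, Finset.sum_congr rfl (fun b _ => h (a, b) c), ← Finset.sum_mul, distOf_fst_marg]

lemma indep_snd {γ : Type*} [DecidableEq γ] [Fintype α] {μ : Ω → ℝ}
    {U : Ω → α} {V : Ω → β} {W : Ω → γ}
    (h : IndepRV μ (fun ω => (U ω, V ω)) W) : IndepRV μ V W := by
  intro b c
  have h1 : distOf μ (fun ω => (V ω, W ω)) (b, c)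
      = ∑ a : α, distOf μ (fun ω => ((U ω, V ω), W ω)) ((a, b), c) := by
    unfold distOf
    rw [Finset.sum_comm]
    refine Finset.sum_congr rfl fun ω _ => ?_
    by_cases hv : V ω = b <;> by_cases hw : W ω = c <;>
      simp [Prod.ext_iff, hv, hw, ite_and, Finset.sum_ite_eq]
  rw [h1, Finset.sum_congr rfl (fun a _ => h (a, b) c), ← Finset.sum_mul, distOf_snd_marg]

end problemmas

section zmodlemmas
variable {Ω : Type*} [Fintype Ω]

lemma sum_zmod2 (g : ZMod 2 → ℝ) : ∑ a : ZMod 2, g a = g 0 + g 1 := Fin.sum_univ_two g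

lemma channel_joint (μ : Ω → ℝ) (X S Nv : Ω → ZMod 2)
    (hind : IndepRV μ Nv (fun ω => (X ω, S ω))) (s y : ZMod 2) :
    distOf μ (fun ω => (S ω, X ω + S ω + Nv ω)) (s, y)
      = distOf μ Nv 0 * distOf μ (fun ω => (X ω, S ω)) (y + s, s)
        + distOf μ Nv 1 * distOf μ (fun ω => (X ω, S ω)) (y + s + 1, s) := by
  have expand : distOf μ (fun ω => (S ω, X ω + S ω + Nv ω)) (s, y)
      = ∑ n : ZMod 2, distOf μ (fun ω => (Nv ω, (X ω, S ω))) (n, (y + s + n, s)) := by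
    unfold distOf
    rw [Finset.sum_comm]
    refine Finset.sum_congr rfl fun ω _ => ?_
    simp only [Prod.mk.injEq, ite_and, Finset.sum_ite_eq, Finset.mem_univ, if_true]
    have z5 : ∀ x sv nv yv : ZMod 2, (x + sv + nv = yv) ↔ (x = yv + sv + nv) := by decide
    by_cases h1 : S ω = s <;> by_cases h2 : X ω = y + s + Nv ω <;>
      simp [h1, h2, z5]
  rw [expand, Finset.sum_congr rfl (fun n _ => hind n (y + s + n, s)), sum_zmod2, add_zero]

lemma entropy_zmod2 {μ : Ω → ℝ} (hμ : IsPMF μ) (W : Ω → ZMod 2) :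
    entropy μ W = binEnt (distOf μ W 1) := by
  have hsum : distOf μ W 0 + distOf μ W 1 = 1 := by
    have h := sum_distOf (μ := μ) W
    rw [hμ.2, sum_zmod2] at h
    exact h
  have h0 : distOf μ W 0 = 1 - distOf μ W 1 := by linarith
  unfold entropy binEnt
  rw [sum_zmod2, h0]
  ring

lemma entropy_pair_zmod2 {μ : Ω → ℝ} (W : Ω → ZMod 2 × ZMod 2) :
    entropy μ W = Real.negMulLog (distOf μ W (0,0)) + Real.negMulLog (distOf μ W (0,1))
      + Real.negMulLog (distOf μ W (1,0)) + Real.negMulLog (distOf μ W (1,1)) := by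
  unfold entropy
  rw [Fintype.sum_prod_type, sum_zmod2, sum_zmod2, sum_zmod2]
  unfold Real.negMulLog
  ring

end zmodlemmas

/-- For the modulo-additive binary channel `Y = X ⊕ S ⊕ N`, `Z = X ⊕ S ⊕ N_z`
with `S ~ Bern(p_s)`, `N ~ Bern(p_n)`, `N_z ~ Bern(p_{n_z})`, the pair
`(N, N_z)` independent of `(X,S)` and `N` independent of `N_z` (so that
`S, N, N_z` are mutually independent and `X` may depend on `S` arbitrarily):
if `p_n ≤ p_{n_z}` then `I(S;Y) − I(S;Z) ≤ H(p_{n_z}) − H(p_n)`. -/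
theorem binary_diff_amp_bound {Ω : Type*} [Fintype Ω] (μ : Ω → ℝ) (hμ : IsPMF μ)
    (X S N Nz : Ω → ZMod 2) (ps pn pnz : ℝ)
    (hS : distOf μ S 1 = ps) (hN : distOf μ N 1 = pn) (hNz : distOf μ Nz 1 = pnz)
    (hps : ps ≤ 1 / 2) (hpn : pn ≤ 1 / 2) (hpnz : pnz ≤ 1 / 2)
    (hindep : IndepRV μ (fun ω => (N ω, Nz ω)) (fun ω => (X ω, S ω)))
    (hNNz : IndepRV μ N Nz)
    (hdeg : pn ≤ pnz) :
    mutInfo μ S (fun ω => X ω + S ω + N ω) -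
      mutInfo μ S (fun ω => X ω + S ω + Nz ω) ≤ binEnt pnz - binEnt pn := by
  obtain ⟨hpos, hsum1⟩ := hμ
  -- joint distribution of (X,S)
  set b00 := distOf μ (fun ω => (X ω, S ω)) (0, 0) with hb00
  set b01 := distOf μ (fun ω => (X ω, S ω)) (0, 1) with hb01
  set b10 := distOf μ (fun ω => (X ω, S ω)) (1, 0) with hb10
  set b11 := distOf μ (fun ω => (X ω, S ω)) (1, 1) with hb11
  have hb00' : 0 ≤ b00 := distOf_nonneg hpos _ _
  have hb01' : 0 ≤ b01 := distOf_nonneg hpos _ _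
  have hb10' : 0 ≤ b10 := distOf_nonneg hpos _ _
  have hb11' : 0 ≤ b11 := distOf_nonneg hpos _ _
  have hbsum : b00 + b01 + b10 + b11 = 1 := by
    have h := sum_distOf (μ := μ) (fun ω => (X ω, S ω))
    rw [hsum1, Fintype.sum_prod_type, sum_zmod2, sum_zmod2, sum_zmod2] at h
    rw [hb00, hb01, hb10, hb11]
    linarith
  have hpn0 : 0 ≤ pn := hN ▸ distOf_nonneg hpos N 1
  have hN0 : distOf μ N 0 = 1 - pn := by
    have h := sum_distOf (μ := μ) N
    rw [hsum1, sum_zmod2, hN] at h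
    linarith
  have hNz0 : distOf μ Nz 0 = 1 - pnz := by
    have h := sum_distOf (μ := μ) Nz
    rw [hsum1, sum_zmod2, hNz] at h
    linarith
  have hNind : IndepRV μ N (fun ω => (X ω, S ω)) := indep_fst hindep
  have hNzind : IndepRV μ Nz (fun ω => (X ω, S ω)) := indep_snd hindep
  have z11 : (1 + 1 : ZMod 2) = 0 := by decide
  -- joint distribution of (S, Y)
  have eY00 : distOf μ (fun ω => (S ω, X ω + S ω + N ω)) (0, 0)
      = b00 * (1 - pn) + b10 * pn := by
    have h := channel_joint μ X S N hNind 0 0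
    simp only [add_zero, zero_add] at h
    rw [h, hN0, hN, ← hb00, ← hb10]; ring
  have eY01 : distOf μ (fun ω => (S ω, X ω + S ω + N ω)) (0, 1)
      = b00 * pn + b10 * (1 - pn) := by
    have h := channel_joint μ X S N hNind 0 1
    simp only [add_zero, zero_add, z11] at h
    rw [h, hN0, hN, ← hb00, ← hb10]; ring
  have eY10 : distOf μ (fun ω => (S ω, X ω + S ω + N ω)) (1, 0)
      = b11 * (1 - pn) + b01 * pn := by
    have h := channel_joint μ X S N hNind 1 0
    simp only [add_zero, zero_add, z11] at h
    rw [h, hN0, hN, ← hb11, ← hb01]; ring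
  have eY11 : distOf μ (fun ω => (S ω, X ω + S ω + N ω)) (1, 1)
      = b11 * pn + b01 * (1 - pn) := by
    have h := channel_joint μ X S N hNind 1 1
    simp only [add_zero, zero_add, z11] at h
    rw [h, hN0, hN, ← hb11, ← hb01]; ring
  have eZ00 : distOf μ (fun ω => (S ω, X ω + S ω + Nz ω)) (0, 0)
      = b00 * (1 - pnz) + b10 * pnz := by
    have h := channel_joint μ X S Nz hNzind 0 0
    simp only [add_zero, zero_add] at h
    rw [h, hNz0, hNz, ← hb00, ← hb10]; ring
  have eZ01 : distOf μ (fun ω => (S ω, X ω + S ω + Nz ω)) (0, 1)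
      = b00 * pnz + b10 * (1 - pnz) := by
    have h := channel_joint μ X S Nz hNzind 0 1
    simp only [add_zero, zero_add, z11] at h
    rw [h, hNz0, hNz, ← hb00, ← hb10]; ring
  have eZ10 : distOf μ (fun ω => (S ω, X ω + S ω + Nz ω)) (1, 0)
      = b11 * (1 - pnz) + b01 * pnz := by
    have h := channel_joint μ X S Nz hNzind 1 0
    simp only [add_zero, zero_add, z11] at h
    rw [h, hNz0, hNz, ← hb11, ← hb01]; ring
  have eZ11 : distOf μ (fun ω => (S ω, X ω + S ω + Nz ω)) (1, 1)
      = b11 * pnz + b01 * (1 - pnz) := by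
    have h := channel_joint μ X S Nz hNzind 1 1
    simp only [add_zero, zero_add, z11] at h
    rw [h, hNz0, hNz, ← hb11, ← hb01]; ring
  -- marginal distributions of Y and Z
  set q := b10 + b01 with hq
  have hq0 : 0 ≤ q := by rw [hq]; linarith
  have hq1 : q ≤ 1 := by rw [hq]; linarith
  have hY1 : distOf μ (fun ω => X ω + S ω + N ω) 1 = bstar q pn := by
    have h : distOf μ (fun ω => (S ω, X ω + S ω + N ω)) (0, 1)
        + distOf μ (fun ω => (S ω, X ω + S ω + N ω)) (1, 1)
        = distOf μ (fun ω => X ω + S ω + N ω) 1 := by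
      have h2 := distOf_snd_marg (μ := μ) S (fun ω => X ω + S ω + N ω) 1
      rw [sum_zmod2] at h2
      exact h2
    rw [← h, eY01, eY11]
    unfold bstar
    rw [hq]
    linear_combination pn * hbsum
  have hZ1 : distOf μ (fun ω => X ω + S ω + Nz ω) 1 = bstar q pnz := by
    have h : distOf μ (fun ω => (S ω, X ω + S ω + Nz ω)) (0, 1)
        + distOf μ (fun ω => (S ω, X ω + S ω + Nz ω)) (1, 1)
        = distOf μ (fun ω => X ω + S ω + Nz ω) 1 := by
      have h2 := distOf_snd_marg (μ := μ) S (fun ω => X ω + S ω + Nz ω) 1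
      rw [sum_zmod2] at h2
      exact h2
    rw [← h, eZ01, eZ11]
    unfold bstar
    rw [hq]
    linear_combination pnz * hbsum
  -- entropies
  have HY : entropy μ (fun ω => X ω + S ω + N ω) = binEnt (bstar q pn) := by
    rw [entropy_zmod2 ⟨hpos, hsum1⟩, hY1]
  have HZ : entropy μ (fun ω => X ω + S ω + Nz ω) = binEnt (bstar q pnz) := by
    rw [entropy_zmod2 ⟨hpos, hsum1⟩, hZ1]
  have HSY : entropy μ (fun ω => (S ω, X ω + S ω + N ω))
      = Real.negMulLog (b00 * (1 - pn) + b10 * pn)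
      + Real.negMulLog (b00 * pn + b10 * (1 - pn))
      + Real.negMulLog (b11 * (1 - pn) + b01 * pn)
      + Real.negMulLog (b11 * pn + b01 * (1 - pn)) := by
    rw [entropy_pair_zmod2, eY00, eY01, eY10, eY11]
  have HSZ : entropy μ (fun ω => (S ω, X ω + S ω + Nz ω))
      = Real.negMulLog (b00 * (1 - pnz) + b10 * pnz)
      + Real.negMulLog (b00 * pnz + b10 * (1 - pnz))
      + Real.negMulLog (b11 * (1 - pnz) + b01 * pnz)
      + Real.negMulLog (b11 * pnz + b01 * (1 - pnz)) := by
    rw [entropy_pair_zmod2, eZ00, eZ01, eZ10, eZ11]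
  -- final assembly
  unfold mutInfo
  rw [HY, HZ, HSY, HSZ]
  have row0 := star2 hb00' hb10' hpn0 hdeg hpnz
  have row1 := star2 hb11' hb01' hpn0 hdeg hpnz
  have hmono := mono2 hq0 hq1 hpn0 hdeg hpnz
  have hD : (b00 + b10) * (binEnt pnz - binEnt pn)
      + (b11 + b01) * (binEnt pnz - binEnt pn) = binEnt pnz - binEnt pn := by
    linear_combination (binEnt pnz - binEnt pn) * hbsum
  linarith
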